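/- Fix λ ∈ (-π/2, π/2), set μ = e^{iλ} cos λ, and let a, b, c ∈ ℂ. For s ∈ ℝ put σ = μ(is - 1), A = σ(σ + c - 1), B = (σ + a)(σ + b). Then Re[(B - A)·conj(μ)] = cos²λ · Re[(is-1)(a+b+1-c)] + Re[a b e^{-iλ}] cos λ. In particular, if Re[(B-A)·conj(μ)] > 0 for all s ∈ ℝ, then Im(a+b+1-c) = 0 and Re[e^{-iλ}(ab - (a+b+1-c))] > 0. -/

import Mathlib

open Complex Real

/-- The direction condition `Re[(B-A) conj μ] > 0` and its consequences. -/
theorem direction_condition (lam : ℝ) (hlam : -(π/2) < lam ∧ lam < π/2)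
    (μ : ℂ) (hμ : μ = Complex.exp ((lam:ℂ) * Complex.I) * (Real.cos lam : ℂ))
    (a b c : ℂ) :
    (∀ s : ℝ,
      ((((μ * (Complex.I * s - 1) + a) * (μ * (Complex.I * s - 1) + b)) -
        (μ * (Complex.I * s - 1)) * (μ * (Complex.I * s - 1) + c - 1)) *
          (starRingEnd ℂ) μ).re =
      (Real.cos lam) ^ 2 * ((Complex.I * s - 1) * (a + b + 1 - c)).re +
        (a * b * Complex.exp (-(lam:ℂ) * Complex.I)).re * Real.cos lam) ∧
    ((∀ s : ℝ, 0 <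
      ((((μ * (Complex.I * s - 1) + a) * (μ * (Complex.I * s - 1) + b)) -
        (μ * (Complex.I * s - 1)) * (μ * (Complex.I * s - 1) + c - 1)) *
          (starRingEnd ℂ) μ).re) →
      (a + b + 1 - c).im = 0 ∧
        0 < (Complex.exp (-(lam:ℂ) * Complex.I) * (a * b - (a + b + 1 - c))).re) := by
  have hcos : 0 < Real.cos lam := Real.cos_pos_of_mem_Ioo ⟨hlam.1, hlam.2⟩
  have hconj : (starRingEnd ℂ) μ = Complex.exp (-(lam:ℂ) * Complex.I) * (Real.cos lam : ℂ) := by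
    rw [hμ, map_mul, ← Complex.exp_conj, map_mul, Complex.conj_I, Complex.conj_ofReal,
      Complex.conj_ofReal]
    ring_nf
  have hμμ : μ * (starRingEnd ℂ) μ = (((Real.cos lam)^2 : ℝ) : ℂ) := by
    rw [hconj, hμ]
    rw [show Complex.exp ((lam:ℂ) * Complex.I) * (Real.cos lam : ℂ) *
        (Complex.exp (-(lam:ℂ) * Complex.I) * (Real.cos lam : ℂ)) =
        Complex.exp ((lam:ℂ) * Complex.I + -(lam:ℂ) * Complex.I) *
          ((Real.cos lam : ℂ) * (Real.cos lam : ℂ)) from by rw [Complex.exp_add]; ring]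
    rw [show ((lam:ℂ) * Complex.I + -(lam:ℂ) * Complex.I) = 0 from by ring, Complex.exp_zero,
      one_mul]
    push_cast
    ring
  have key : ∀ s : ℝ,
      ((((μ * (Complex.I * s - 1) + a) * (μ * (Complex.I * s - 1) + b)) -
        (μ * (Complex.I * s - 1)) * (μ * (Complex.I * s - 1) + c - 1)) *
          (starRingEnd ℂ) μ).re =
      (Real.cos lam) ^ 2 * ((Complex.I * s - 1) * (a + b + 1 - c)).re +
        (a * b * Complex.exp (-(lam:ℂ) * Complex.I)).re * Real.cos lam := by
    intro s
    have expand : (((μ * (Complex.I * s - 1) + a) * (μ * (Complex.I * s - 1) + b)) -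
        (μ * (Complex.I * s - 1)) * (μ * (Complex.I * s - 1) + c - 1)) *
          (starRingEnd ℂ) μ =
        (μ * (starRingEnd ℂ) μ) * ((Complex.I * s - 1) * (a + b + 1 - c)) +
          (a * b * Complex.exp (-(lam:ℂ) * Complex.I)) * ((Real.cos lam : ℝ) : ℂ) := by
      rw [hconj]; ring
    rw [expand, hμμ,
      mul_comm (a * b * Complex.exp (-(lam:ℂ) * Complex.I)) (((Real.cos lam : ℝ) : ℂ))]
    simp only [Complex.add_re, Complex.re_ofReal_mul]
    ring
  refine ⟨key, fun hpos => ?_⟩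
  set w : ℂ := a + b + 1 - c with hw
  have hre : ∀ s : ℝ, ((Complex.I * s - 1) * w).re = -w.re - s * w.im := by
    intro s
    simp only [Complex.mul_re, Complex.sub_re, Complex.sub_im, Complex.mul_im,
      Complex.I_re, Complex.I_im, Complex.ofReal_re, Complex.ofReal_im, Complex.one_re,
      Complex.one_im]
    ring
  set C : ℝ := (a * b * Complex.exp (-(lam:ℂ) * Complex.I)).re with hC
  have hpos' : ∀ s : ℝ, 0 < (Real.cos lam)^2 * (-w.re - s * w.im) + C * Real.cos lam := by
    intro s
    have := hpos s
    rw [key s, hre s] at this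
    exact this
  have hcos2 : (0:ℝ) < (Real.cos lam)^2 := by positivity
  have him : w.im = 0 := by
    by_contra h
    have hd : (Real.cos lam)^2 * w.im ≠ 0 := by
      exact mul_ne_zero (ne_of_gt hcos2) h
    set s : ℝ := (C * Real.cos lam - (Real.cos lam)^2 * w.re) / ((Real.cos lam)^2 * w.im)
    have := hpos' s
    have hs : (Real.cos lam)^2 * (s * w.im) = C * Real.cos lam - (Real.cos lam)^2 * w.re := by
      rw [show (Real.cos lam)^2 * (s * w.im) = s * ((Real.cos lam)^2 * w.im) by ring]
      exact div_mul_cancel₀ _ hd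
    nlinarith [hs, this]
  have h0 := hpos' 0
  have hgoal : (Complex.exp (-(lam:ℂ) * Complex.I) * (a * b - w)).re
      = C - Real.cos lam * w.re := by
    have hexp_re : (Complex.exp (-(lam:ℂ) * Complex.I)).re = Real.cos lam := by
      simp [Complex.exp_re]
    have hexp_im : (Complex.exp (-(lam:ℂ) * Complex.I)).im = -Real.sin lam := by
      simp [Complex.exp_im]
    simp only [hC, Complex.mul_re, Complex.sub_re, Complex.sub_im, hexp_re, hexp_im, him]
    ring
  refine ⟨him, ?_⟩
  rw [hgoal]
  nlinarith [h0, hcos]
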